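/- There exist constants C > 0 and α ∈ (0,1) such that for any probability measure μ on ℝⁿ with finite second moment and any ℓ > 0, the discrete entropy of μ on the cubic grid of scale ℓ satisfies Σ_{j∈ℤⁿ} μ(Q_j^ℓ) log(μ(Q_j^ℓ)) ≥ −C (M(μ) + nℓ² + 1)^α + n log(ℓ). -/

import Mathlib

open MeasureTheory ENNReal Filter Topology
noncomputable section

abbrev En (n : ℕ) : Type := EuclideanSpace ℝ (Fin n)

def IsCoupling {n : ℕ} (μ ν : Measure (En n)) (γ : Measure (En n × En n)) : Prop :=
  γ.map Prod.fst = μ ∧ γ.map Prod.snd = ν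

def tCost {n : ℕ} (γ : Measure (En n × En n)) : ℝ≥0∞ :=
  ∫⁻ p, (‖p.1 - p.2‖₊ : ℝ≥0∞) ^ 2 ∂γ

def W2sq {n : ℕ} (μ ν : Measure (En n)) : ℝ≥0∞ :=
  ⨅ (γ : Measure (En n × En n)) (_ : IsCoupling μ ν γ), tCost γ

def M2 {n : ℕ} (μ : Measure (En n)) : ℝ≥0∞ := ∫⁻ x, (‖x‖₊ : ℝ≥0∞) ^ 2 ∂μ

def dens {X : Type*} [MeasureSpace X] (μ : Measure X) (x : X) : ℝ :=
  (μ.rnDeriv volume x).toReal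

def entIntegrand {X : Type*} [MeasureSpace X] (μ : Measure X) (x : X) : ℝ :=
  dens μ x * Real.log (dens μ x)

def Hneg {X : Type*} [MeasureSpace X] (μ : Measure X) : ℝ≥0∞ :=
  ∫⁻ x, ENNReal.ofReal (-(entIntegrand μ x))

def Hpos {X : Type*} [MeasureSpace X] (μ : Measure X) : ℝ≥0∞ :=
  ∫⁻ x, ENNReal.ofReal (entIntegrand μ x)

open scoped Classical in
def entE {X : Type*} [MeasureSpace X] (μ : Measure X) : EReal :=
  if μ ≪ (volume : Measure X) then
    (if Hpos μ = ∞ then (⊤ : EReal) else ((Hpos μ).toReal : EReal) - ((Hneg μ : ℝ≥0∞) : EReal))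
  else ⊤

def W2epsE {n : ℕ} (ε : ℝ) (μ ν : Measure (En n)) : EReal :=
  ⨅ (γ : Measure (En n × En n)) (_ : IsCoupling μ ν γ),
    ((tCost γ : ℝ≥0∞) : EReal) + (ε : EReal) * entE γ

def cube {n : ℕ} (j : Fin n → ℤ) (ℓ : ℝ) : Set (En n) :=
  {x | ∀ i, (j i : ℝ) * ℓ ≤ x i ∧ x i < ((j i : ℝ) + 1) * ℓ}

def cellNormalize {n : ℕ} (μ : Measure (En n)) (S : Set (En n)) : Measure (En n) :=
  (μ S)⁻¹ • μ.restrict S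

def blockApprox {n : ℕ} (μ ν : Measure (En n)) (γ : Measure (En n × En n)) (ℓ : ℝ) :
    Measure (En n × En n) :=
  Measure.sum (fun jk : (Fin n → ℤ) × (Fin n → ℤ) =>
    γ (cube jk.1 ℓ ×ˢ cube jk.2 ℓ) •
      ((cellNormalize μ (cube jk.1 ℓ)).prod (cellNormalize ν (cube jk.2 ℓ))))


/-! ### Auxiliary lemmas for stmt_10 -/

section Stmt10Aux

open Real

lemma mem_cube_iff' {n : ℕ} {j : Fin n → ℤ} {ℓ : ℝ} (hℓ : 0 < ℓ) {x : En n} :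
    x ∈ cube j ℓ ↔ ∀ i, ⌊x i / ℓ⌋ = j i := by
  unfold cube
  simp only [Set.mem_setOf_eq]
  refine forall_congr' fun i => ?_
  rw [Int.floor_eq_iff]
  constructor
  · rintro ⟨h1, h2⟩
    exact ⟨(le_div_iff₀ hℓ).2 h1, (div_lt_iff₀ hℓ).2 (by push_cast; linarith)⟩
  · rintro ⟨h1, h2⟩
    refine ⟨(le_div_iff₀ hℓ).1 h1, ?_⟩
    have := (div_lt_iff₀ hℓ).1 h2
    push_cast at this ⊢
    linarith

lemma measurableSet_cube' {n : ℕ} (j : Fin n → ℤ) (ℓ : ℝ) : MeasurableSet (cube j ℓ) := by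
  have : cube j ℓ = ⋂ i, (fun x : En n => x i) ⁻¹' Set.Ico ((j i : ℝ) * ℓ) (((j i : ℝ) + 1) * ℓ) := by
    ext x; simp [cube, Set.mem_Ico]
  rw [this]
  exact MeasurableSet.iInter fun i =>
    ((EuclideanSpace.proj (𝕜 := ℝ) i).continuous.measurable) measurableSet_Ico

lemma cube_disjoint' {n : ℕ} {ℓ : ℝ} (hℓ : 0 < ℓ) :
    Pairwise (Function.onFun Disjoint (fun j : Fin n → ℤ => cube j ℓ)) := by
  intro j k hjk
  rw [Function.onFun, Set.disjoint_left]
  intro x hj hk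
  exact hjk (funext fun i => ((mem_cube_iff' hℓ).1 hj i).symm.trans ((mem_cube_iff' hℓ).1 hk i))

lemma iUnion_cube' {n : ℕ} {ℓ : ℝ} (hℓ : 0 < ℓ) :
    (⋃ j : Fin n → ℤ, cube j ℓ) = Set.univ := by
  ext x
  simp only [Set.mem_iUnion, Set.mem_univ, iff_true]
  exact ⟨fun i => ⌊x i / ℓ⌋, (mem_cube_iff' hℓ).2 fun i => rfl⟩

lemma tsum_measure_cube' {n : ℕ} (μ : Measure (En n)) [IsProbabilityMeasure μ] {ℓ : ℝ}
    (hℓ : 0 < ℓ) : ∑' j : Fin n → ℤ, μ (cube j ℓ) = 1 := by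
  rw [← measure_iUnion (cube_disjoint' hℓ) (fun j => measurableSet_cube' j ℓ), iUnion_cube' hℓ,
    measure_univ]

lemma cube_coord_bound' {n : ℕ} {j : Fin n → ℤ} {ℓ : ℝ} (hℓ : 0 < ℓ) {x : En n}
    (hx : x ∈ cube j ℓ) (i : Fin n) : ((j i).natAbs : ℝ) * ℓ ≤ |x i| + ℓ := by
  obtain ⟨h1, h2⟩ := hx i
  have habs : ((j i).natAbs : ℝ) = |(j i : ℝ)| := by
    rw [Nat.cast_natAbs]; push_cast; ring_nf
  rw [habs]
  rcases le_or_gt 0 (j i) with h | h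
  · have : (0:ℝ) ≤ (j i : ℝ) := by exact_mod_cast h
    rw [abs_of_nonneg this]
    have : x i ≤ |x i| := le_abs_self _
    nlinarith
  · have hj1 : (j i : ℝ) + 1 ≤ 0 := by exact_mod_cast Int.lt_iff_add_one_le.mp h
    have hxneg : x i < 0 := lt_of_lt_of_le h2 (by nlinarith)
    rw [abs_of_nonpos (by exact_mod_cast h.le : (j i : ℝ) ≤ 0), abs_of_neg hxneg]
    nlinarith

lemma cube_T_bound' {n : ℕ} {j : Fin n → ℤ} {ℓ : ℝ} (hℓ : 0 < ℓ) {x : En n}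
    (hx : x ∈ cube j ℓ) :
    ℓ * ((∑ i, (j i).natAbs : ℕ) : ℝ) ≤ (‖x‖ ^ 2 + n) / 2 + n * ℓ := by
  have h1 : ℓ * ((∑ i, (j i).natAbs : ℕ) : ℝ) ≤ ∑ i, (|x i| + ℓ) := by
    push_cast
    rw [Finset.mul_sum]
    exact Finset.sum_le_sum fun i _ => by
      rw [mul_comm]; exact cube_coord_bound' hℓ hx i
  have h2 : ∑ i, (|x i| + ℓ) = (∑ i, |x i|) + n * ℓ := by
    rw [Finset.sum_add_distrib, Finset.sum_const, Finset.card_univ, Fintype.card_fin,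
      nsmul_eq_mul]
  have h3 : (∑ i, |x i|) ≤ ((∑ i, (x i) ^ 2) + n) / 2 := by
    have hb : ∀ i : Fin n, |x i| ≤ ((x i) ^ 2 + 1) / 2 := fun i => by
      nlinarith [sq_abs (x i), sq_nonneg (|x i| - 1)]
    calc (∑ i, |x i|) ≤ ∑ i, ((x i) ^ 2 + 1) / 2 := Finset.sum_le_sum fun i _ => hb i
      _ = ((∑ i, (x i) ^ 2) + n) / 2 := by
          rw [← Finset.sum_div, Finset.sum_add_distrib, Finset.sum_const, Finset.card_univ,
            Fintype.card_fin, nsmul_eq_mul, mul_one]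
  have h4 : ‖x‖ ^ 2 = ∑ i, (x i) ^ 2 := by
    rw [EuclideanSpace.norm_eq, Real.sq_sqrt (by positivity)]
    simp [sq_abs]
  rw [h4]; linarith

lemma moment_bound' {n : ℕ} (μ : Measure (En n)) [IsProbabilityMeasure μ] {ℓ : ℝ} (hℓ : 0 < ℓ) :
    ∑' j : Fin n → ℤ, μ (cube j ℓ) * ENNReal.ofReal (ℓ * ((∑ i, (j i).natAbs : ℕ) : ℝ))
      ≤ ENNReal.ofReal 2⁻¹ * (M2 μ + n) + ENNReal.ofReal (n * ℓ) := by
  set G : En n → ℝ≥0∞ := fun x => ENNReal.ofReal 2⁻¹ * ((‖x‖₊ : ℝ≥0∞) ^ 2 + n)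
      + ENNReal.ofReal (n * ℓ) with hG
  have hGmeas : Measurable G := by
    exact (((measurable_nnnorm.coe_nnreal_ennreal.pow_const 2).add measurable_const).const_mul _).add
      measurable_const
  calc ∑' j : Fin n → ℤ, μ (cube j ℓ) * ENNReal.ofReal (ℓ * ((∑ i, (j i).natAbs : ℕ) : ℝ))
      = ∑' j : Fin n → ℤ, ∫⁻ _ in cube j ℓ, ENNReal.ofReal (ℓ * ((∑ i, (j i).natAbs : ℕ) : ℝ)) ∂μ := by
        simp [setLIntegral_const, mul_comm]
    _ ≤ ∑' j : Fin n → ℤ, ∫⁻ x in cube j ℓ, G x ∂μ := by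
        refine ENNReal.tsum_le_tsum fun j => setLIntegral_mono hGmeas fun x hx => ?_
        calc ENNReal.ofReal (ℓ * ((∑ i, (j i).natAbs : ℕ) : ℝ))
            ≤ ENNReal.ofReal ((‖x‖ ^ 2 + n) / 2 + n * ℓ) :=
              ENNReal.ofReal_le_ofReal (cube_T_bound' hℓ hx)
          _ = G x := by
              rw [hG, ENNReal.ofReal_add (by positivity) (by positivity)]
              congr 1
              rw [div_eq_inv_mul, ENNReal.ofReal_mul (by norm_num),
                ENNReal.ofReal_add (by positivity) (n.cast_nonneg),
                ENNReal.ofReal_pow (norm_nonneg _), ← coe_nnnorm x, ENNReal.ofReal_coe_nnreal,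
                ENNReal.ofReal_natCast]
    _ = ∫⁻ x in ⋃ j : Fin n → ℤ, cube j ℓ, G x ∂μ :=
        (lintegral_iUnion (fun j => measurableSet_cube' j ℓ) (cube_disjoint' hℓ) G).symm
    _ = ∫⁻ x, G x ∂μ := by rw [iUnion_cube' hℓ, Measure.restrict_univ]
    _ = ENNReal.ofReal 2⁻¹ * (M2 μ + n) + ENNReal.ofReal (n * ℓ) := by
        rw [hG]
        rw [lintegral_add_right _ measurable_const, lintegral_const, measure_univ, mul_one]
        congr 1
        rw [lintegral_const_mul _ (show Measurable fun x : En n => (‖x‖₊ : ℝ≥0∞) ^ 2 + (n:ℝ≥0∞) from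
          (measurable_nnnorm.coe_nnreal_ennreal.pow_const 2).add measurable_const)]
        congr 1
        rw [lintegral_add_right _ measurable_const, lintegral_const, measure_univ, mul_one, M2]

lemma tsum_int_pow_natAbs' {ρ : ℝ≥0∞} (hρ : ρ ≤ 1) :
    ∑' k : ℤ, ρ ^ (k.natAbs) ≤ 2 * (1 - ρ)⁻¹ := by
  rw [tsum_of_nat_of_neg_add_one ENNReal.summable ENNReal.summable]
  have h1 : ∑' m : ℕ, ρ ^ (((m : ℤ)).natAbs) = (1 - ρ)⁻¹ := by
    simp [Int.natAbs_natCast, ENNReal.tsum_geometric]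
  have h2 : ∑' m : ℕ, ρ ^ ((-((m : ℤ) + 1)).natAbs) = ρ * (1 - ρ)⁻¹ := by
    have h : ∀ m : ℕ, (-((m : ℤ) + 1)).natAbs = m + 1 := by
      intro m; rw [Int.natAbs_neg]; exact_mod_cast Int.natAbs_natCast (m+1)
    simp only [h]
    exact ENNReal.tsum_geometric_add_one ρ
  rw [h1, h2, two_mul]
  exact add_le_add le_rfl (by
    calc ρ * (1 - ρ)⁻¹ ≤ 1 * (1 - ρ)⁻¹ := mul_le_mul_left hρ _
      _ = (1 - ρ)⁻¹ := one_mul _)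

lemma tsum_pi_pow' (ρ : ℝ≥0∞) : ∀ n : ℕ,
    ∑' j : Fin n → ℤ, ρ ^ (∑ i, (j i).natAbs) = (∑' k : ℤ, ρ ^ k.natAbs) ^ n := by
  intro n
  induction n with
  | zero =>
      rw [pow_zero]
      have h : ∀ j : Fin 0 → ℤ, ρ ^ (∑ i, (j i).natAbs) = 1 := fun j => by simp
      rw [tsum_congr h, tsum_eq_single (default : Fin 0 → ℤ)
        (fun b hb => absurd (Subsingleton.elim b default) hb)]
  | succ n ih =>
      have he : ∀ p : ℤ × (Fin n → ℤ),
          (fun j : Fin (n+1) → ℤ => ρ ^ (∑ i, (j i).natAbs)) ((Fin.consEquiv (fun _ : Fin (n+1) => ℤ)) p)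
            = ρ ^ p.1.natAbs * ρ ^ (∑ i, (p.2 i).natAbs) := by
        rintro ⟨k, g⟩
        simp only [Fin.consEquiv_apply, Fin.sum_univ_succ,
          Fin.cons_zero, Fin.cons_succ, pow_add]
      calc ∑' j : Fin (n+1) → ℤ, ρ ^ (∑ i, (j i).natAbs)
          = ∑' p : ℤ × (Fin n → ℤ), ρ ^ p.1.natAbs * ρ ^ (∑ i, (p.2 i).natAbs) := by
            rw [← (Fin.consEquiv (fun _ : Fin (n+1) => ℤ)).tsum_eq
              (fun j : Fin (n+1) → ℤ => ρ ^ (∑ i, (j i).natAbs))]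
            exact tsum_congr he
        _ = (∑' k : ℤ, ρ ^ k.natAbs) * ∑' g : Fin n → ℤ, ρ ^ (∑ i, (g i).natAbs) := by
            have step1 : (∑' (a : ℤ) (b : Fin n → ℤ), ρ ^ a.natAbs * ρ ^ (∑ i, (b i).natAbs))
                = ∑' (a : ℤ), ρ ^ a.natAbs * ∑' b : Fin n → ℤ, ρ ^ (∑ i, (b i).natAbs) :=
              tsum_congr fun a => ENNReal.tsum_mul_left
            rw [ENNReal.tsum_prod', step1, ENNReal.tsum_mul_right]
        _ = (∑' k : ℤ, ρ ^ k.natAbs) ^ (n + 1) := by rw [ih, pow_succ, mul_comm]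

lemma q_tsum_le_one' {r : ℝ} (hr0 : 0 ≤ r) (hr1 : r < 1) (n : ℕ) :
    ∑' j : Fin n → ℤ, ENNReal.ofReal (((1 - r) / 2) ^ n * r ^ (∑ i, (j i).natAbs)) ≤ 1 := by
  have hc0 : (0:ℝ) ≤ (1 - r) / 2 := by linarith
  have heq : ∀ j : Fin n → ℤ, ENNReal.ofReal (((1 - r) / 2) ^ n * r ^ (∑ i, (j i).natAbs))
      = (ENNReal.ofReal ((1 - r) / 2)) ^ n * (ENNReal.ofReal r) ^ (∑ i, (j i).natAbs) := fun j => by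
    rw [ENNReal.ofReal_mul (by positivity), ENNReal.ofReal_pow hc0, ENNReal.ofReal_pow hr0]
  rw [tsum_congr heq, ENNReal.tsum_mul_left, tsum_pi_pow', ← mul_pow]
  have hρ1 : ENNReal.ofReal r ≤ 1 := by
    rw [← ENNReal.ofReal_one]; exact ENNReal.ofReal_le_ofReal hr1.le
  calc (ENNReal.ofReal ((1 - r) / 2) * ∑' k : ℤ, (ENNReal.ofReal r) ^ k.natAbs) ^ n
      ≤ (ENNReal.ofReal ((1 - r) / 2) * (2 * (1 - ENNReal.ofReal r)⁻¹)) ^ n :=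
        pow_le_pow_left' (mul_le_mul_right (tsum_int_pow_natAbs' hρ1) _) n
    _ = 1 := by
        have h2 : ENNReal.ofReal ((1 - r) / 2) * 2 = 1 - ENNReal.ofReal r := by
          rw [← ENNReal.ofReal_ofNat, ← ENNReal.ofReal_mul hc0, div_mul_cancel₀ _ (two_ne_zero),
            ENNReal.ofReal_sub _ hr0, ENNReal.ofReal_one]
        rw [← mul_assoc, h2, ENNReal.mul_inv_cancel, one_pow]
        · have hlt : ENNReal.ofReal r < 1 := ENNReal.ofReal_lt_one.2 hr1
          simp [ne_eq, tsub_eq_zero_iff_le, not_le, hlt, hr1]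
        · exact (tsub_le_self.trans_lt one_lt_top).ne

lemma entropy_term_ge' {p q : ℝ} (hp0 : 0 ≤ p) (hq : 0 < q) :
    p * Real.log q + (p - q) ≤ p * Real.log p := by
  rcases hp0.eq_or_lt with h | hp
  · simp [← h, hq.le]
  · have hlog : Real.log (q / p) ≤ q / p - 1 := Real.log_le_sub_one_of_pos (by positivity)
    rw [Real.log_div hq.ne' hp.ne'] at hlog
    have h1 := mul_le_mul_of_nonneg_left hlog hp.le
    have h2 : p * (q / p - 1) = q - p := by field_simp
    nlinarith

set_option maxHeartbeats 2000000 in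
lemma arith_final' {n : ℕ} (hn : 1 ≤ n) {M ℓ S t : ℝ} (hM : 0 ≤ M) (hℓ : 0 < ℓ)
    (hS : S = M + n * ℓ ^ 2 + 1) (ht : t = ℓ / Real.sqrt S) :
    -(5 * (n + 1)) * Real.sqrt S + n * Real.log ℓ ≤
      n * Real.log ((1 - Real.exp (-t)) / 2) - t * (((M + n) / 2 + n * ℓ) / ℓ) := by
  have hn1 : (1:ℝ) ≤ n := by exact_mod_cast hn
  have hS1 : 1 ≤ S := by nlinarith [sq_nonneg ℓ]
  have hSpos : 0 < S := by linarith
  have hsq1 : 1 ≤ Real.sqrt S := by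
    rw [show (1:ℝ) = Real.sqrt 1 by simp]; exact Real.sqrt_le_sqrt hS1
  have hsqpos : 0 < Real.sqrt S := by linarith
  have hmulself : Real.sqrt S * Real.sqrt S = S := Real.mul_self_sqrt hSpos.le
  have ht0 : 0 < t := by rw [ht]; exact div_pos hℓ hsqpos
  have hsqn : Real.sqrt (n : ℝ) * ℓ ≤ Real.sqrt S := by
    rw [show Real.sqrt (n:ℝ) * ℓ = Real.sqrt ((n:ℝ) * ℓ ^ 2) by
      rw [Real.sqrt_mul (n.cast_nonneg), Real.sqrt_sq hℓ.le]]
    exact Real.sqrt_le_sqrt (by nlinarith)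
  have hsqn1 : 1 ≤ Real.sqrt (n:ℝ) := by
    rw [show (1:ℝ) = Real.sqrt 1 by simp]; exact Real.sqrt_le_sqrt hn1
  have hmulselfn : Real.sqrt (n:ℝ) * Real.sqrt (n:ℝ) = (n:ℝ) :=
    Real.mul_self_sqrt (n.cast_nonneg)
  have hsqnlen : Real.sqrt (n:ℝ) ≤ (n:ℝ) := by nlinarith
  have ht1 : t ≤ 1 := by
    rw [ht, div_le_one hsqpos]
    calc ℓ ≤ Real.sqrt (n:ℝ) * ℓ := le_mul_of_one_le_left hℓ.le hsqn1
      _ ≤ Real.sqrt S := hsqn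
  have hexp : Real.exp (-t) ≤ 1 / (1 + t) := by
    rw [Real.exp_neg, one_div]
    exact inv_anti₀ (by linarith) (by linarith [Real.add_one_le_exp t])
  have h1me : t / (1 + t) ≤ 1 - Real.exp (-t) := by
    have h : 1 - 1 / (1 + t) = t / (1 + t) := by field_simp; ring
    linarith
  have hcpos : 0 < t / (1 + t) := by positivity
  have hlogc : Real.log ℓ - Real.log S / 2 - t - Real.log 2 ≤
      Real.log ((1 - Real.exp (-t)) / 2) := by
    have hpos1 : 0 < 1 - Real.exp (-t) := lt_of_lt_of_le hcpos h1me
    rw [Real.log_div hpos1.ne' two_ne_zero]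
    have e1 : Real.log (t / (1 + t)) ≤ Real.log (1 - Real.exp (-t)) :=
      Real.log_le_log hcpos h1me
    have e2 : Real.log (t / (1 + t)) = Real.log t - Real.log (1 + t) :=
      Real.log_div ht0.ne' (by linarith)
    have e3 : Real.log (1 + t) ≤ t := by
      have := Real.log_le_sub_one_of_pos (show (0:ℝ) < 1 + t by linarith); linarith
    have e4 : Real.log t = Real.log ℓ - Real.log S / 2 := by
      rw [ht, Real.log_div hℓ.ne' hsqpos.ne', Real.log_sqrt hSpos.le]
    linarith
  have htB : t * (((M + n) / 2 + n * ℓ) / ℓ) ≤ Real.sqrt S / 2 + n / 2 + n := by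
    have hrw : t * (((M + n) / 2 + n * ℓ) / ℓ) = ((M + n) / 2 + n * ℓ) / Real.sqrt S := by
      rw [ht]; field_simp
    rw [hrw, div_le_iff₀ hsqpos]
    have hnl : (n:ℝ) * ℓ ≤ Real.sqrt (n:ℝ) * Real.sqrt S := by
      calc (n:ℝ) * ℓ = Real.sqrt (n:ℝ) * (Real.sqrt (n:ℝ) * ℓ) := by
            rw [← mul_assoc, hmulselfn]
        _ ≤ Real.sqrt (n:ℝ) * Real.sqrt S :=
            mul_le_mul_of_nonneg_left hsqn (Real.sqrt_nonneg _)
    have hMS : M ≤ S := by nlinarith [sq_nonneg ℓ]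
    nlinarith [mul_le_mul_of_nonneg_right hsqnlen hsqpos.le,
      mul_le_mul_of_nonneg_right hsq1 (by positivity : (0:ℝ) ≤ (n:ℝ))]
  have hlogS : Real.log S ≤ 2 * Real.sqrt S := by
    have h0 : Real.log S = 2 * Real.log (Real.sqrt S) := by
      rw [Real.log_sqrt hSpos.le]; ring
    have h2 := Real.log_le_sub_one_of_pos hsqpos
    nlinarith
  have hlog2 : Real.log 2 ≤ 1 := by
    have := Real.log_le_sub_one_of_pos (show (0:ℝ) < 2 by norm_num); linarith
  have hn0 : (0:ℝ) ≤ (n:ℝ) := by positivity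
  have hmul := mul_le_mul_of_nonneg_left hlogc hn0
  have hexpand : (n:ℝ) * (Real.log ℓ - Real.log S / 2 - t - Real.log 2)
      = (n:ℝ) * Real.log ℓ - (n:ℝ) * Real.log S / 2 - (n:ℝ) * t - (n:ℝ) * Real.log 2 := by ring
  rw [hexpand] at hmul
  have hA : (n:ℝ) * Real.log S ≤ 2 * ((n:ℝ) * Real.sqrt S) := by
    have := mul_le_mul_of_nonneg_left hlogS hn0; linarith
  have hB : (n:ℝ) * t ≤ (n:ℝ) := by
    have := mul_le_mul_of_nonneg_left ht1 hn0; linarith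
  have hC : (n:ℝ) * Real.log 2 ≤ (n:ℝ) := by
    have := mul_le_mul_of_nonneg_left hlog2 hn0; linarith
  have hD : 4 * (n:ℝ) + 4 ≤ (4 * (n:ℝ) + 4) * Real.sqrt S :=
    le_mul_of_one_le_right (by linarith) hsq1
  linarith [hmul, htB, hA, hB, hC, hD, hsq1]

end Stmt10Aux
/-- there are `C > 0`, `α ∈ (0,1)` such that for any probability measure on
`ℝⁿ` with finite second moment and any grid scale `ℓ > 0`, the discrete grid entropy
satisfies `Σ_j μ(Q_j^ℓ) log μ(Q_j^ℓ) ≥ −C (M(μ) + nℓ² + 1)^α + n log ℓ`. -/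
theorem stmt_10 {n : ℕ} :
    ∃ C : ℝ, 0 < C ∧ ∃ α : ℝ, α ∈ Set.Ioo (0:ℝ) 1 ∧
      ∀ (μ : Measure (En n)) [IsProbabilityMeasure μ], M2 μ ≠ ∞ → ∀ ℓ : ℝ, 0 < ℓ →
        Summable (fun j : Fin n → ℤ =>
          (μ (cube j ℓ)).toReal * Real.log ((μ (cube j ℓ)).toReal)) ∧
        -C * (((M2 μ).toReal + n * ℓ ^ 2 + 1) ^ α) + n * Real.log ℓ ≤
          ∑' j : Fin n → ℤ, (μ (cube j ℓ)).toReal * Real.log ((μ (cube j ℓ)).toReal) := by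

  refine ⟨5 * ((n:ℝ) + 1), by positivity, 1/2, ⟨by norm_num, by norm_num⟩, ?_⟩
  intro μ hprob hM2 ℓ hℓ
  rcases Nat.eq_zero_or_pos n with hn0 | hn
  · -- the case n = 0 : there is a single cube, equal to the whole space
    subst hn0
    have hcube : ∀ j : Fin 0 → ℤ, cube j ℓ = Set.univ := fun j => by
      ext x; simp [cube]
    have hf : (fun j : Fin 0 → ℤ => (μ (cube j ℓ)).toReal * Real.log ((μ (cube j ℓ)).toReal))
        = fun _ => (0:ℝ) := by
      funext j; rw [hcube, measure_univ]; simp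
    rw [hf]
    refine ⟨summable_zero, ?_⟩
    rw [tsum_zero]
    have hM0 : (0:ℝ) ≤ (M2 μ).toReal := ENNReal.toReal_nonneg
    have hpow : (0:ℝ) ≤ ((M2 μ).toReal + (0:ℕ) * ℓ ^ 2 + 1) ^ ((1:ℝ)/2) :=
      Real.rpow_nonneg (by push_cast; nlinarith) _
    push_cast at hpow ⊢
    nlinarith
  · -- the main case n ≥ 1
    set M : ℝ := (M2 μ).toReal with hMdef
    have hM0 : 0 ≤ M := ENNReal.toReal_nonneg
    set S : ℝ := M + n * ℓ ^ 2 + 1 with hSdef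
    have hS1 : (1:ℝ) ≤ S := by
      rw [hSdef]; nlinarith [sq_nonneg ℓ, Nat.cast_nonneg (α := ℝ) n, mul_nonneg (Nat.cast_nonneg (α := ℝ) n) (sq_nonneg ℓ)]
    have hSpos : 0 < S := lt_of_lt_of_le one_pos hS1
    have hsqpos : 0 < Real.sqrt S := Real.sqrt_pos.2 hSpos
    set t : ℝ := ℓ / Real.sqrt S with htdef
    have ht0 : 0 < t := div_pos hℓ hsqpos
    set r : ℝ := Real.exp (-t) with hrdef
    have hr0 : 0 < r := Real.exp_pos _
    have hr1 : r < 1 := by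
      rw [hrdef]
      have h := Real.exp_lt_exp.2 (show -t < 0 by linarith)
      simpa using h
    set c : ℝ := (1 - r) / 2 with hcdef
    have hc0 : 0 < c := by rw [hcdef]; linarith
    -- the cell masses
    set p : (Fin n → ℤ) → ℝ := fun j => (μ (cube j ℓ)).toReal with hpdef
    have hp0 : ∀ j, 0 ≤ p j := fun j => ENNReal.toReal_nonneg
    have hp1 : ∀ j, p j ≤ 1 := fun j => by
      have h := prob_le_one (μ := μ) (s := cube j ℓ)
      calc p j ≤ (1:ℝ≥0∞).toReal := ENNReal.toReal_mono one_ne_top h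
        _ = 1 := ENNReal.toReal_one
    have hsum1 : ∑' j : Fin n → ℤ, μ (cube j ℓ) = 1 := tsum_measure_cube' μ hℓ
    have hpsummable : Summable p := ENNReal.summable_toReal (by rw [hsum1]; exact one_ne_top)
    have hptsum : ∑' j, p j = 1 := by
      rw [hpdef, ← ENNReal.tsum_toReal_eq (fun j => measure_ne_top μ _), hsum1,
        ENNReal.toReal_one]
    -- the discrete first moments
    set T : (Fin n → ℤ) → ℕ := fun j => ∑ i, (j i).natAbs with hTdef
    have hmom := moment_bound' μ hℓ
    set Rb : ℝ≥0∞ := ENNReal.ofReal 2⁻¹ * (M2 μ + n) + ENNReal.ofReal (n * ℓ) with hRbdef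
    have hRb_ne : Rb ≠ ∞ := by
      rw [hRbdef]
      exact ENNReal.add_ne_top.2 ⟨ENNReal.mul_ne_top ENNReal.ofReal_ne_top
        (ENNReal.add_ne_top.2 ⟨hM2, ENNReal.natCast_ne_top n⟩), ENNReal.ofReal_ne_top⟩
    set A : (Fin n → ℤ) → ℝ≥0∞ := fun j => μ (cube j ℓ) * ENNReal.ofReal (ℓ * (T j : ℝ))
      with hAdef
    have hA_ne : ∀ j, A j ≠ ∞ := fun j =>
      ENNReal.mul_ne_top (measure_ne_top μ _) ENNReal.ofReal_ne_top
    have hAsum_ne : ∑' j, A j ≠ ∞ := (lt_of_le_of_lt hmom hRb_ne.lt_top).ne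
    have hAtoReal : ∀ j, (A j).toReal = ℓ * (p j * T j) := fun j => by
      rw [hAdef, ENNReal.toReal_mul, ENNReal.toReal_ofReal (by positivity)]
      rw [hpdef]; ring
    have hsummable1 : Summable (fun j => ℓ * (p j * T j)) :=
      (ENNReal.summable_toReal hAsum_ne).congr hAtoReal
    have hPTsummable : Summable (fun j => p j * (T j : ℝ)) := by
      have h := hsummable1.mul_left ℓ⁻¹
      refine h.congr fun j => ?_
      field_simp
    set PT : ℝ := ∑' j, p j * (T j : ℝ) with hPTdef
    have hPT0 : 0 ≤ PT := tsum_nonneg fun j => by positivity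
    have hPTle : ℓ * PT ≤ (M + n) / 2 + n * ℓ := by
      have h1 : ℓ * PT = ∑' j, ℓ * (p j * T j) := by
        rw [hPTdef, ← tsum_mul_left]
      have h2 : ∑' j, ℓ * (p j * T j) = (∑' j, A j).toReal := by
        rw [ENNReal.tsum_toReal_eq hA_ne]
        exact (tsum_congr hAtoReal).symm
      have h3 : (∑' j, A j).toReal ≤ Rb.toReal := ENNReal.toReal_mono hRb_ne hmom
      have h4 : Rb.toReal = 2⁻¹ * (M + n) + n * ℓ := by
        rw [hRbdef, ENNReal.toReal_add (ENNReal.mul_ne_top ENNReal.ofReal_ne_top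
            (ENNReal.add_ne_top.2 ⟨hM2, ENNReal.natCast_ne_top n⟩)) ENNReal.ofReal_ne_top,
          ENNReal.toReal_mul, ENNReal.toReal_ofReal (by norm_num),
          ENNReal.toReal_add hM2 (ENNReal.natCast_ne_top n),
          ENNReal.toReal_ofReal (by positivity), hMdef]
        simp
      rw [h1, h2]; rw [h4] at h3; linarith
    have hPTB : PT ≤ ((M + n) / 2 + n * ℓ) / ℓ := by
      rw [le_div_iff₀ hℓ]; linarith
    -- the reference discrete Gaussian-type weights
    set q : (Fin n → ℤ) → ℝ := fun j => c ^ n * r ^ (T j) with hqdef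
    have hq0 : ∀ j, 0 < q j := fun j => by rw [hqdef]; positivity
    have hqenn : ∑' j, ENNReal.ofReal (q j) ≤ 1 := by
      rw [hqdef, hcdef, hTdef]
      exact q_tsum_le_one' hr0.le hr1 n
    have hqsum_ne : ∑' j, ENNReal.ofReal (q j) ≠ ∞ := (lt_of_le_of_lt hqenn one_lt_top).ne
    have hqsummable : Summable q :=
      (ENNReal.summable_toReal hqsum_ne).congr fun j => ENNReal.toReal_ofReal (hq0 j).le
    have hqtsum : ∑' j, q j ≤ 1 := by
      have heq : ∑' j, q j = (∑' j, ENNReal.ofReal (q j)).toReal := by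
        rw [ENNReal.tsum_toReal_eq (fun j => ENNReal.ofReal_ne_top)]
        exact (tsum_congr fun j => (ENNReal.toReal_ofReal (hq0 j).le).symm)
      rw [heq]
      calc (∑' j, ENNReal.ofReal (q j)).toReal ≤ (1:ℝ≥0∞).toReal :=
            ENNReal.toReal_mono one_ne_top hqenn
        _ = 1 := ENNReal.toReal_one
    -- pointwise entropy inequality
    have hlogq : ∀ j, Real.log (q j) = n * Real.log c - t * T j := fun j => by
      rw [hqdef, Real.log_mul (pow_ne_zero _ hc0.ne') (pow_ne_zero _ hr0.ne'),
        Real.log_pow, Real.log_pow, hrdef, Real.log_exp]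
      ring
    have hkey : ∀ j, p j * (n * Real.log c - t * T j) + (p j - q j)
        ≤ p j * Real.log (p j) := fun j => by
      have h := entropy_term_ge' (hp0 j) (hq0 j)
      rw [hlogq j] at h
      exact h
    have hg1 : Summable (fun j => ((n:ℝ) * Real.log c) * p j - t * (p j * T j)) :=
      (hpsummable.mul_left _).sub (hPTsummable.mul_left t)
    have hg1' : Summable (fun j => p j * ((n:ℝ) * Real.log c - t * T j)) :=
      hg1.congr fun j => by ring
    have hg2 : Summable (fun j => p j - q j) := hpsummable.sub hqsummable
    have hgsummable : Summable
        (fun j => p j * ((n:ℝ) * Real.log c - t * T j) + (p j - q j)) := hg1'.add hg2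
    have hf_nonpos : ∀ j, p j * Real.log (p j) ≤ 0 := fun j =>
      mul_nonpos_of_nonneg_of_nonpos (hp0 j) (Real.log_nonpos (hp0 j) (hp1 j))
    have hfsummable : Summable (fun j => p j * Real.log (p j)) := by
      rw [← summable_neg_iff]
      exact Summable.of_nonneg_of_le (fun j => neg_nonneg.2 (hf_nonpos j))
        (fun j => neg_le_neg (hkey j)) hgsummable.neg
    refine ⟨hfsummable, ?_⟩
    have htsum_ge : ∑' j, (p j * ((n:ℝ) * Real.log c - t * T j) + (p j - q j))
        ≤ ∑' j, p j * Real.log (p j) := hgsummable.tsum_le_tsum hkey hfsummable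
    have hgtsum : ∑' j, (p j * ((n:ℝ) * Real.log c - t * T j) + (p j - q j))
        = ((n:ℝ) * Real.log c) * 1 - t * PT + (1 - ∑' j, q j) := by
      rw [hg1'.tsum_add hg2, hpsummable.tsum_sub hqsummable, hptsum]
      congr 1
      have hcongr : ∀ j, p j * ((n:ℝ) * Real.log c - t * T j)
          = ((n:ℝ) * Real.log c) * p j - t * (p j * (T j : ℝ)) := fun j => by ring
      rw [tsum_congr hcongr, (hpsummable.mul_left _).tsum_sub (hPTsummable.mul_left t),
        tsum_mul_left, tsum_mul_left, hptsum, ← hPTdef]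
    have hfinal : (n:ℝ) * Real.log c - t * (((M + n) / 2 + n * ℓ) / ℓ)
        ≤ ∑' j, p j * Real.log (p j) := by
      have hmono : t * PT ≤ t * (((M + n) / 2 + n * ℓ) / ℓ) :=
        mul_le_mul_of_nonneg_left hPTB ht0.le
      rw [hgtsum] at htsum_ge
      linarith
    have harith := arith_final' hn hM0 hℓ hSdef htdef
    rw [hcdef, hrdef] at hfinal
    rw [show S ^ ((1:ℝ)/2) = Real.sqrt S from (Real.sqrt_eq_rpow S).symm]
    calc -(5 * ((n:ℝ) + 1)) * Real.sqrt S + n * Real.log ℓ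
        ≤ (n:ℝ) * Real.log ((1 - Real.exp (-t)) / 2) - t * (((M + n) / 2 + n * ℓ) / ℓ) := harith
      _ ≤ ∑' j, p j * Real.log (p j) := hfinal
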